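/- Let k = k(n) be an integer-valued function with 3·ln n ≤ k(n) ≤ n/8 for all large n, and let p = p(n) satisfy 3·ln(n/k(n))/k(n) ≤ p(n) ≤ 1. Then the probability that the random graph G ~ G(n,p(n)) is k(n)-pseudorandom tends to 1 as n → ∞. -/

import Mathlib

open MeasureTheory Filter

/-- The Bernoulli measure on `Bool` with success probability `p`. -/
noncomputable def bernoulliBool (p : ℝ) : Measure Bool :=
  (ENNReal.ofReal p) • Measure.dirac true + (ENNReal.ofReal (1 - p)) • Measure.dirac false

/-- The binomial random graph measure `G(n,p)`: each potential edge (pair of distinct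
vertices of `Fin n`) is present independently with probability `p`. An outcome is an
indicator function on unordered pairs. -/
noncomputable def gnp (n : ℕ) (p : ℝ) : Measure (Sym2 (Fin n) → Bool) :=
  Measure.pi fun _ => bernoulliBool p

/-- The simple graph on `[n]` determined by an outcome `ω` of `G(n,p)`. -/
def graphOf {n : ℕ} (ω : Sym2 (Fin n) → Bool) : SimpleGraph (Fin n) where
  Adj v w := v ≠ w ∧ ω s(v, w) = true
  symm := by
    constructor
    intro v w h
    exact ⟨h.1.symm, by rw [Sym2.eq_swap]; exact h.2⟩
  loopless := by
    constructor
    intro v h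
    exact h.1 rfl

instance graphOfDecidableAdj {n : ℕ} (ω : Sym2 (Fin n) → Bool) :
    DecidableRel (graphOf ω).Adj :=
  fun v w => inferInstanceAs (Decidable (v ≠ w ∧ ω s(v, w) = true))

/-- A graph is `k`-pseudorandom if any two disjoint vertex sets of size at least `k`
have an edge between them. -/
def IsPseudorandom {V : Type*} (G : SimpleGraph V) (k : ℕ) : Prop :=
  ∀ A B : Finset V, Disjoint A B → k ≤ A.card → k ≤ B.card →
    ∃ a ∈ A, ∃ b ∈ B, G.Adj a b

lemma bern_false (p : ℝ) : bernoulliBool p {false} = ENNReal.ofReal (1 - p) := by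
  simp [bernoulliBool, Measure.dirac_apply]

lemma bern_univ (p : ℝ) (h0 : 0 ≤ p) (h1 : p ≤ 1) : bernoulliBool p Set.univ = 1 := by
  simp only [bernoulliBool, Measure.add_apply, Measure.smul_apply, Measure.dirac_apply,
    smul_eq_mul, Set.indicator_univ, Pi.one_apply, mul_one]
  rw [← ENNReal.ofReal_add h0 (by linarith)]
  simp

lemma bern_prob (p : ℝ) (h0 : 0 ≤ p) (h1 : p ≤ 1) : IsProbabilityMeasure (bernoulliBool p) :=
  ⟨bern_univ p h0 h1⟩

lemma gnp_cyl (n : ℕ) (p : ℝ) (h0 : 0 ≤ p) (h1 : p ≤ 1) (S : Finset (Sym2 (Fin n))) :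
    gnp n p {ω | ∀ e ∈ S, ω e = false} = (ENNReal.ofReal (1 - p)) ^ S.card := by
  haveI := bern_prob p h0 h1
  have hset : {ω : Sym2 (Fin n) → Bool | ∀ e ∈ S, ω e = false}
      = Set.pi Set.univ (fun e => if e ∈ S then ({false} : Set Bool) else Set.univ) := by
    ext ω
    simp only [Set.mem_setOf_eq, Set.mem_pi, Set.mem_univ, forall_true_left]
    constructor
    · intro h e
      by_cases he : e ∈ S <;> simp [he, h]
    · intro h e he
      have := h e
      simpa [he] using this
  rw [hset, gnp, Measure.pi_pi]
  have : ∀ e : Sym2 (Fin n), bernoulliBool p (if e ∈ S then ({false} : Set Bool) else Set.univ)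
      = if e ∈ S then ENNReal.ofReal (1 - p) else 1 := by
    intro e
    by_cases he : e ∈ S
    · simp [he, bern_false]
    · rw [if_neg he, if_neg he]; exact bern_univ p h0 h1
  rw [Finset.prod_congr rfl (fun e _ => this e), Finset.prod_ite_mem Finset.univ S _,
    Finset.univ_inter, Finset.prod_const]

lemma card_pairSet {n : ℕ} (A B : Finset (Fin n)) (hd : Disjoint A B) :
    (Finset.image (fun ab : Fin n × Fin n => s(ab.1, ab.2)) (A ×ˢ B)).card
      = A.card * B.card := by
  rw [Finset.card_image_of_injOn, Finset.card_product]
  intro x hx y hy hxy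
  simp only [Finset.mem_coe, Finset.mem_product] at hx hy
  rw [Sym2.eq_iff] at hxy
  rcases hxy with ⟨h1, h2⟩ | ⟨h1, h2⟩
  · exact Prod.ext h1 h2
  · exact absurd (Finset.disjoint_left.1 hd hx.1) (by rw [h1]; exact fun h => h hy.2)

lemma gnp_pairs (n : ℕ) (p : ℝ) (h0 : 0 ≤ p) (h1 : p ≤ 1) (A B : Finset (Fin n))
    (hd : Disjoint A B) :
    gnp n p {ω | ∀ a ∈ A, ∀ b ∈ B, ω s(a, b) = false}
      = (ENNReal.ofReal (1 - p)) ^ (A.card * B.card) := by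
  have : {ω : Sym2 (Fin n) → Bool | ∀ a ∈ A, ∀ b ∈ B, ω s(a, b) = false}
      = {ω | ∀ e ∈ Finset.image (fun ab : Fin n × Fin n => s(ab.1, ab.2)) (A ×ˢ B),
          ω e = false} := by
    ext ω
    simp only [Set.mem_setOf_eq, Finset.mem_image, Finset.mem_product, Prod.exists]
    constructor
    · rintro h e ⟨a, b, ⟨ha, hb⟩, rfl⟩
      exact h a ha b hb
    · intro h a ha b hb
      exact h _ ⟨a, b, ⟨ha, hb⟩, rfl⟩
  rw [this, gnp_cyl n p h0 h1, card_pairSet A B hd]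

lemma not_pseudo_bound (n K : ℕ) (p : ℝ) (h0 : 0 ≤ p) (h1 : p ≤ 1) :
    gnp n p {ω | ¬ IsPseudorandom (graphOf ω) K}
      ≤ (n.choose K)^2 * (ENNReal.ofReal (1 - p)) ^ (K * K) := by
  classical
  set P : Finset (Finset (Fin n) × Finset (Fin n)) :=
    ((Finset.univ.powersetCard K) ×ˢ (Finset.univ.powersetCard K)).filter
      (fun AB => Disjoint AB.1 AB.2) with hP
  have hsub : {ω : Sym2 (Fin n) → Bool | ¬ IsPseudorandom (graphOf ω) K}
      ⊆ ⋃ AB ∈ P, {ω | ∀ a ∈ AB.1, ∀ b ∈ AB.2, ω s(a, b) = false} := by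
    intro ω hω
    simp only [Set.mem_setOf_eq, IsPseudorandom, not_forall] at hω
    obtain ⟨A, B, hd, hA, hB, hno⟩ := hω
    push_neg at hno
    obtain ⟨A', hA'sub, hA'card⟩ := Finset.exists_subset_card_eq hA
    obtain ⟨B', hB'sub, hB'card⟩ := Finset.exists_subset_card_eq hB
    have hd' : Disjoint A' B' := hd.mono hA'sub hB'sub
    refine Set.mem_biUnion (Finset.mem_coe.mpr (show (A', B') ∈ P from ?_)) ?_
    · simp only [hP, Finset.mem_filter, Finset.mem_product, Finset.mem_powersetCard]
      exact ⟨⟨⟨Finset.subset_univ _, hA'card⟩, ⟨Finset.subset_univ _, hB'card⟩⟩, hd'⟩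
    · intro a ha b hb
      have hne : a ≠ b := fun h => Finset.disjoint_left.1 hd' ha (h ▸ hb)
      have := hno a (hA'sub ha) b (hB'sub hb)
      simp only [graphOf, ne_eq] at this
      by_contra hfalse
      exact this ⟨hne, by simpa using hfalse⟩
  calc gnp n p {ω | ¬ IsPseudorandom (graphOf ω) K}
      ≤ ∑ AB ∈ P, gnp n p {ω | ∀ a ∈ AB.1, ∀ b ∈ AB.2, ω s(a, b) = false} :=
        (measure_mono hsub).trans (measure_biUnion_finset_le _ _)
    _ = ∑ AB ∈ P, (ENNReal.ofReal (1 - p)) ^ (K * K) := by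
        refine Finset.sum_congr rfl fun AB hAB => ?_
        simp only [hP, Finset.mem_filter, Finset.mem_product, Finset.mem_powersetCard] at hAB
        rw [gnp_pairs n p h0 h1 _ _ hAB.2, hAB.1.1.2, hAB.1.2.2]
    _ = P.card * (ENNReal.ofReal (1 - p)) ^ (K * K) := by
        rw [Finset.sum_const, nsmul_eq_mul]
    _ ≤ (n.choose K)^2 * (ENNReal.ofReal (1 - p)) ^ (K * K) := by
        gcongr
        have : P.card ≤ ((Finset.univ.powersetCard K (α := Fin n)) ×ˢ
            (Finset.univ.powersetCard K)).card := Finset.card_filter_le _ _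
        rw [Finset.card_product, Finset.card_powersetCard, Finset.card_univ, Fintype.card_fin]
          at this
        exact_mod_cast this.trans_eq (sq (n.choose K)).symm

lemma pow_over_factorial_le_exp (K : ℕ) : ((K : ℝ)) ^ K / (Nat.factorial K) ≤ Real.exp K := by
  have h := Real.sum_le_exp_of_nonneg (x := (K : ℝ)) (Nat.cast_nonneg K) (K + 1)
  refine le_trans ?_ h
  have := Finset.single_le_sum (f := fun i => (K : ℝ) ^ i / (Nat.factorial i))
    (fun i _ => by positivity) (Finset.self_mem_range_succ K)
  simpa using this

lemma key_bound (n K : ℕ) (p : ℝ) (h3 : 3 ≤ (K : ℝ)) (h8 : (K : ℝ) ≤ (n : ℝ) / 8)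
    (hpl : 3 * Real.log ((n : ℝ) / (K : ℝ)) / (K : ℝ) ≤ p) (hpu : p ≤ 1) :
    (n.choose K : ℝ) ^ 2 * (1 - p) ^ (K * K) ≤ (Real.exp 1 ^ 2 / 8) ^ K := by
  have hK : (0 : ℝ) < K := by linarith
  have hn : (0 : ℝ) < n := by linarith
  set L : ℝ := Real.log ((n : ℝ) / (K : ℝ)) with hL
  have hnk : (1 : ℝ) ≤ (n : ℝ) / (K : ℝ) := by
    rw [le_div_iff₀ hK]; linarith
  have hL0 : 0 ≤ L := Real.log_nonneg hnk
  have hp0 : 0 ≤ p := le_trans (by positivity) hpl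
  have hy : ((K : ℝ) / n) ≠ 0 := by positivity
  -- choose bound
  have hchoose : (n.choose K : ℝ) ≤ ((n : ℝ) / K) ^ K * Real.exp K := by
    calc (n.choose K : ℝ) ≤ (n : ℝ) ^ K / (Nat.factorial K) := by
          exact_mod_cast Nat.choose_le_pow_div K n
      _ = ((n : ℝ) / K) ^ K * ((K : ℝ) ^ K / (Nat.factorial K)) := by
          rw [div_pow]
          field_simp
      _ ≤ ((n : ℝ) / K) ^ K * Real.exp K :=
          mul_le_mul_of_nonneg_left (pow_over_factorial_le_exp K) (by positivity)
  -- (1-p)^{K*K} bound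
  have hq : (1 - p) ^ (K * K) ≤ (((K : ℝ) / n) ^ 3) ^ K := by
    have h1 : (1 - p) ^ (K * K) ≤ Real.exp (-p) ^ (K * K) := by
      apply pow_le_pow_left₀ (by linarith)
      linarith [Real.add_one_le_exp (-p)]
    have h2 : Real.exp (-p) ^ (K * K) = Real.exp (-(p * ((K : ℝ) * K))) := by
      rw [← Real.exp_nat_mul]
      congr 1
      push_cast
      ring
    have h3' : Real.exp (-(p * ((K : ℝ) * K))) ≤ Real.exp ((K : ℕ) * (-(3 * L))) := by
      apply Real.exp_le_exp.2
      have h5 : 3 * L ≤ p * K := by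
        rw [div_le_iff₀ hK] at hpl; linarith
      push_cast
      nlinarith [hK.le]
    have h4 : Real.exp ((K : ℕ) * (-(3 * L))) = (((K : ℝ) / n) ^ 3) ^ K := by
      rw [Real.exp_nat_mul]
      congr 1
      rw [show -(3 * L) = (3 : ℕ) * (-L) by push_cast; ring, Real.exp_nat_mul,
        Real.exp_neg, Real.exp_log (by positivity), inv_div]
    calc (1 - p) ^ (K * K) ≤ Real.exp (-p) ^ (K * K) := h1
      _ = Real.exp (-(p * ((K : ℝ) * K))) := h2
      _ ≤ Real.exp ((K : ℕ) * (-(3 * L))) := h3'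
      _ = (((K : ℝ) / n) ^ 3) ^ K := h4
  have hq0 : (0 : ℝ) ≤ (1 - p) ^ (K * K) := pow_nonneg (by linarith) _
  have hinner : ((((K : ℝ) / n)⁻¹) ^ 2 * Real.exp 1 ^ 2 * ((K : ℝ) / n) ^ 3)
      = Real.exp 1 ^ 2 * ((K : ℝ) / n) := by
    field_simp
  calc (n.choose K : ℝ) ^ 2 * (1 - p) ^ (K * K)
      ≤ (((n : ℝ) / K) ^ K * Real.exp K) ^ 2 * (((K : ℝ) / n) ^ 3) ^ K := by
        have h6 : (n.choose K : ℝ) ^ 2 ≤ (((n : ℝ) / K) ^ K * Real.exp K) ^ 2 :=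
          pow_le_pow_left₀ (Nat.cast_nonneg _) hchoose 2
        exact mul_le_mul h6 hq hq0 (by positivity)
    _ = (Real.exp 1 ^ 2 * ((K : ℝ) / n)) ^ K := by
        rw [show ((n : ℝ) / K) = ((K : ℝ) / n)⁻¹ by rw [inv_div],
          show Real.exp (K : ℝ) = Real.exp 1 ^ K by rw [← Real.exp_nat_mul, mul_one]]
        rw [← hinner]
        ring
    _ ≤ (Real.exp 1 ^ 2 / 8) ^ K := by
        apply pow_le_pow_left₀ (by positivity)
        have h7 : (K : ℝ) / n ≤ 1 / 8 := by
          rw [div_le_div_iff₀ hn (by norm_num)]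
          linarith
        calc Real.exp 1 ^ 2 * ((K : ℝ) / n) ≤ Real.exp 1 ^ 2 * (1 / 8) :=
              mul_le_mul_of_nonneg_left h7 (by positivity)
          _ = Real.exp 1 ^ 2 / 8 := by ring

lemma gnp_prob (n : ℕ) (p : ℝ) (h0 : 0 ≤ p) (h1 : p ≤ 1) :
    IsProbabilityMeasure (gnp n p) := by
  haveI := bern_prob p h0 h1
  unfold gnp
  infer_instance
theorem statement0 (k : ℕ → ℕ) (p : ℕ → ℝ)
    (hk : ∀ᶠ n : ℕ in atTop,
      3 * Real.log n ≤ (k n : ℝ) ∧ (k n : ℝ) ≤ (n : ℝ) / 8)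
    (hp : ∀ n : ℕ,
      3 * Real.log ((n : ℝ) / (k n : ℝ)) / (k n : ℝ) ≤ p n ∧ p n ≤ 1) :
    Tendsto (fun n : ℕ => gnp n (p n) {ω | IsPseudorandom (graphOf ω) (k n)})
      atTop (nhds 1) := by
  set r : ℝ := Real.exp 1 ^ 2 / 8 with hr
  have he : Real.exp 1 < 2.7182818286 := Real.exp_one_lt_d9
  have he0 : 0 < Real.exp 1 := Real.exp_pos 1
  have hr0 : 0 ≤ r := by positivity
  have hr1 : r < 1 := by rw [hr]; nlinarith
  -- eventually hypotheses with 3 ≤ k n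
  have hk3 : ∀ᶠ n : ℕ in atTop, 3 ≤ (k n : ℝ) ∧ (k n : ℝ) ≤ (n : ℝ) / 8 := by
    filter_upwards [hk, eventually_ge_atTop 3] with n hn h3n
    refine ⟨?_, hn.2⟩
    have hlog : 1 ≤ Real.log n := by
      rw [Real.le_log_iff_exp_le (by exact_mod_cast Nat.lt_of_lt_of_le (by norm_num) h3n)]
      calc Real.exp 1 ≤ 2.7182818286 := he.le
        _ ≤ 3 := by norm_num
        _ ≤ (n : ℝ) := by exact_mod_cast h3n
    linarith [hn.1]
  -- k n → ∞
  have hloglim : Tendsto (fun n : ℕ => 3 * Real.log n) atTop atTop :=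
    (Real.tendsto_log_atTop.comp tendsto_natCast_atTop_atTop).const_mul_atTop
      (by norm_num : (0:ℝ) < 3)
  have hklim : Tendsto k atTop atTop := by
    rw [← tendsto_natCast_atTop_iff (R := ℝ)]
    exact tendsto_atTop_mono' _ (hk.mono fun n hn => hn.1) hloglim
  -- the real bound tends to 0
  have hrlim : Tendsto (fun n : ℕ => ENNReal.ofReal (r ^ k n)) atTop (nhds 0) := by
    have h00 : (0 : ENNReal) = ENNReal.ofReal 0 := by simp
    rw [h00]
    exact ENNReal.tendsto_ofReal
      ((tendsto_pow_atTop_nhds_zero_of_lt_one hr0 hr1).comp hklim)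
  set a : ℕ → ENNReal := fun n => gnp n (p n) {ω | ¬ IsPseudorandom (graphOf ω) (k n)} with ha
  -- eventual bound on a
  have hbound : ∀ᶠ n : ℕ in atTop, a n ≤ ENNReal.ofReal (r ^ k n) := by
    filter_upwards [hk3] with n hn
    obtain ⟨h3, h8⟩ := hn
    have hK : (0 : ℝ) < (k n : ℝ) := by linarith
    have hnk : (1 : ℝ) ≤ (n : ℝ) / (k n : ℝ) := by
      rw [le_div_iff₀ hK]; linarith
    have hp0 : 0 ≤ p n := le_trans (div_nonneg
      (mul_nonneg (by norm_num) (Real.log_nonneg hnk)) hK.le) (hp n).1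
    have hp1 : p n ≤ 1 := (hp n).2
    calc a n ≤ (n.choose (k n))^2 * (ENNReal.ofReal (1 - p n)) ^ (k n * k n) :=
          not_pseudo_bound n (k n) (p n) hp0 hp1
      _ = ENNReal.ofReal ((n.choose (k n) : ℝ)^2 * (1 - p n) ^ (k n * k n)) := by
          rw [ENNReal.ofReal_mul (by positivity : (0:ℝ) ≤ ((n.choose (k n) : ℝ))^2),
            ENNReal.ofReal_pow (by linarith : (0:ℝ) ≤ 1 - p n),
            ENNReal.ofReal_pow (Nat.cast_nonneg _), ENNReal.ofReal_natCast]
      _ ≤ ENNReal.ofReal (r ^ k n) := ENNReal.ofReal_le_ofReal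
          (key_bound n (k n) (p n) h3 h8 (hp n).1 hp1)
  have halim : Tendsto a atTop (nhds 0) := by
    apply tendsto_of_tendsto_of_tendsto_of_le_of_le' tendsto_const_nhds hrlim
    · exact Eventually.of_forall fun n => zero_le
    · exact hbound
  -- squeeze for the main event
  have hcompl : ∀ n : ℕ, ({ω : Sym2 (Fin n) → Bool | IsPseudorandom (graphOf ω) (k n)})ᶜ
      = {ω | ¬ IsPseudorandom (graphOf ω) (k n)} := fun n => rfl
  have hupper : ∀ᶠ n : ℕ in atTop,
      gnp n (p n) {ω | IsPseudorandom (graphOf ω) (k n)} ≤ 1 := by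
    filter_upwards [hk3] with n hn
    have hK : (0 : ℝ) < (k n : ℝ) := by linarith [hn.1]
    have hnk : (1 : ℝ) ≤ (n : ℝ) / (k n : ℝ) := by
      rw [le_div_iff₀ hK]; linarith [hn.1, hn.2]
    have hp0 : 0 ≤ p n := le_trans (div_nonneg
      (mul_nonneg (by norm_num) (Real.log_nonneg hnk)) hK.le) (hp n).1
    haveI := gnp_prob n (p n) hp0 (hp n).2
    exact prob_le_one
  have hlower : ∀ᶠ n : ℕ in atTop,
      1 - a n ≤ gnp n (p n) {ω | IsPseudorandom (graphOf ω) (k n)} := by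
    filter_upwards [hk3] with n hn
    have hK : (0 : ℝ) < (k n : ℝ) := by linarith [hn.1]
    have hnk : (1 : ℝ) ≤ (n : ℝ) / (k n : ℝ) := by
      rw [le_div_iff₀ hK]; linarith [hn.1, hn.2]
    have hp0 : 0 ≤ p n := le_trans (div_nonneg
      (mul_nonneg (by norm_num) (Real.log_nonneg hnk)) hK.le) (hp n).1
    haveI := gnp_prob n (p n) hp0 (hp n).2
    rw [tsub_le_iff_right]
    have := measure_union_le (μ := gnp n (p n))
      {ω : Sym2 (Fin n) → Bool | IsPseudorandom (graphOf ω) (k n)}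
      ({ω : Sym2 (Fin n) → Bool | IsPseudorandom (graphOf ω) (k n)})ᶜ
    rw [Set.union_compl_self, measure_univ, hcompl n] at this
    exact this
  have h1lim : Tendsto (fun n : ℕ => 1 - a n) atTop (nhds 1) := by
    have := ENNReal.Tendsto.sub (tendsto_const_nhds (x := (1 : ENNReal))) halim
      (Or.inl ENNReal.one_ne_top)
    simpa using this
  exact tendsto_of_tendsto_of_tendsto_of_le_of_le' h1lim tendsto_const_nhds hlower hupper
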